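/- Let V > 0, μ > 0, x > 0 and let Q : ℝ → ℝ be nondecreasing and nonnegative with Q(τ) = 0 for all τ ≤ 0. Define Ū(τ) = inf_{σ ≤ τ} (Q(σ) + μ·(τ − σ)) and let g*(q) = 0 for q ≤ 1/V and g*(q) = μ·(q − 1/V) for q > 1/V. Then for every t ∈ ℝ: inf_{τ ∈ ℝ} ( x·g*((t − τ)/x) + Ū(τ) ) = inf_{τ ∈ ℝ} ( x·g*((t − τ)/x) + Q(τ) ). -/

import Mathlib

/-- Second identity of the Lax formula: the variational solution can be expressed directly
in terms of the inflow profile `Q` instead of the released-flow profile `Ū`. -/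
theorem lax_formula_inflow_eq_released (V μ x : ℝ) (hV : 0 < V) (hμ : 0 < μ) (hx : 0 < x)
    (Q : ℝ → ℝ) (hQmono : Monotone Q) (hQnonneg : ∀ τ, 0 ≤ Q τ) (hQzero : ∀ τ ≤ 0, Q τ = 0)
    (t : ℝ) :
    sInf (Set.range fun τ : ℝ =>
        x * (if (t - τ) / x ≤ 1 / V then 0 else μ * ((t - τ) / x - 1 / V)) +
          sInf ((fun σ => Q σ + μ * (τ - σ)) '' Set.Iic τ)) =
      sInf (Set.range fun τ : ℝ =>
        x * (if (t - τ) / x ≤ 1 / V then 0 else μ * ((t - τ) / x - 1 / V)) + Q τ) := by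
  set f : ℝ → ℝ := fun τ =>
    x * (if (t - τ) / x ≤ 1 / V then 0 else μ * ((t - τ) / x - 1 / V)) with hf
  show sInf (Set.range fun τ : ℝ =>
      f τ + sInf ((fun σ => Q σ + μ * (τ - σ)) '' Set.Iic τ)) =
    sInf (Set.range fun τ : ℝ => f τ + Q τ)
  have hfnn : ∀ τ, 0 ≤ f τ := by
    intro τ
    simp only [hf]
    split_ifs with h
    · simp
    · push_neg at h
      have h1 : 0 ≤ (t - τ) / x - 1 / V := by linarith
      exact mul_nonneg hx.le (mul_nonneg hμ.le h1)
  -- Lipschitz-type inequality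
  have hlip : ∀ σ τ : ℝ, σ ≤ τ → f σ ≤ f τ + μ * (τ - σ) := by
    intro σ τ hστ
    have hx' : x ≠ 0 := ne_of_gt hx
    have hpq : (t - τ) / x ≤ (t - σ) / x :=
      (div_le_div_iff_of_pos_right hx).mpr (by linarith)
    have hdiff : μ * (τ - σ) = x * (μ * ((t - σ) / x - (t - τ) / x)) := by
      field_simp
      ring
    rw [hdiff]
    simp only [hf]
    rw [← mul_add]
    apply mul_le_mul_of_nonneg_left ?_ hx.le
    set p := (t - σ) / x
    set q := (t - τ) / x
    split_ifs with h1 h2 h2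
    · nlinarith
    · push_neg at h2; nlinarith
    · push_neg at h1; nlinarith
    · nlinarith
  -- properties of inner inf
  have hSne : ∀ τ : ℝ, ((fun σ => Q σ + μ * (τ - σ)) '' Set.Iic τ).Nonempty := by
    intro τ; exact ⟨Q τ + μ * (τ - τ), ⟨τ, le_refl τ, rfl⟩⟩
  have hSbdd : ∀ τ : ℝ, BddBelow ((fun σ => Q σ + μ * (τ - σ)) '' Set.Iic τ) := by
    intro τ
    refine ⟨0, ?_⟩
    rintro y ⟨σ, hσ, rfl⟩
    have : 0 ≤ μ * (τ - σ) := mul_nonneg hμ.le (by simp only [Set.mem_Iic] at hσ; linarith)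
    have := hQnonneg σ
    dsimp only
    linarith
  have hUle : ∀ τ : ℝ, sInf ((fun σ => Q σ + μ * (τ - σ)) '' Set.Iic τ) ≤ Q τ := by
    intro τ
    have : Q τ + μ * (τ - τ) ∈ (fun σ => Q σ + μ * (τ - σ)) '' Set.Iic τ :=
      ⟨τ, le_refl τ, rfl⟩
    have h := csInf_le (hSbdd τ) this
    simpa using h
  have hUnn : ∀ τ : ℝ, 0 ≤ sInf ((fun σ => Q σ + μ * (τ - σ)) '' Set.Iic τ) := by
    intro τ
    apply le_csInf (hSne τ)
    rintro y ⟨σ, hσ, rfl⟩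
    have : 0 ≤ μ * (τ - σ) := mul_nonneg hμ.le (by simp only [Set.mem_Iic] at hσ; linarith)
    have := hQnonneg σ
    dsimp only
    linarith
  have hAbdd : BddBelow (Set.range fun τ : ℝ =>
      f τ + sInf ((fun σ => Q σ + μ * (τ - σ)) '' Set.Iic τ)) := by
    refine ⟨0, ?_⟩
    rintro y ⟨τ, rfl⟩
    have := hfnn τ; have := hUnn τ; dsimp only; linarith
  have hBbdd : BddBelow (Set.range fun τ : ℝ => f τ + Q τ) := by
    refine ⟨0, ?_⟩
    rintro y ⟨τ, rfl⟩
    have := hfnn τ; have := hQnonneg τ; dsimp only; linarith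
  apply le_antisymm
  · apply le_csInf (Set.range_nonempty _)
    rintro y ⟨τ, rfl⟩
    calc sInf (Set.range fun τ : ℝ =>
          f τ + sInf ((fun σ => Q σ + μ * (τ - σ)) '' Set.Iic τ))
        ≤ f τ + sInf ((fun σ => Q σ + μ * (τ - σ)) '' Set.Iic τ) :=
          csInf_le hAbdd ⟨τ, rfl⟩
      _ ≤ f τ + Q τ := by have := hUle τ; linarith
  · apply le_csInf (Set.range_nonempty _)
    rintro y ⟨τ, rfl⟩
    have key : sInf (Set.range fun τ : ℝ => f τ + Q τ) - f τ ≤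
        sInf ((fun σ => Q σ + μ * (τ - σ)) '' Set.Iic τ) := by
      apply le_csInf (hSne τ)
      rintro b ⟨σ, hσ, rfl⟩
      have h1 : sInf (Set.range fun τ : ℝ => f τ + Q τ) ≤ f σ + Q σ :=
        csInf_le hBbdd ⟨σ, rfl⟩
      have h2 := hlip σ τ (Set.mem_Iic.mp hσ)
      dsimp only
      linarith
    dsimp only
    linarith
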